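/- Let H_0, ..., H_{K-1} be d×d matrices, α ∈ R, g ∈ R^d, 1 ≤ L < K, and set P_j = ∏_{k=K-j}^{K-1}(I - α H_k) with P_0 = I. Then ∏_{k=0}^{K-1}(I - α H_k) g − [I + Σ_{l=1}^{L} Σ_{0≤k_1<...<k_l<K} ∏_{i=1}^{l}(-α H_{k_i})] g = Σ_{l=1}^{K-L} [Σ_{0≤k_1<...<k_L≤K-1-l} ∏_{i=1}^{L}(-α H_{k_i})] (-α H_{K-l}) P_{l-1} g. -/

import Mathlib

open Matrix Finset

variable {d : ℕ}

/-- Operator (spectral) norm of a real `d × d` matrix, acting on Euclidean space. -/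
noncomputable def matOpNorm (M : Matrix (Fin d) (Fin d) ℝ) : ℝ :=
  ‖Matrix.toEuclideanCLM (𝕜 := ℝ) M‖

/-- Apply a matrix to a vector of Euclidean space. -/
noncomputable def applyM (M : Matrix (Fin d) (Fin d) ℝ) (g : EuclideanSpace ℝ (Fin d)) :
    EuclideanSpace ℝ (Fin d) :=
  Matrix.toEuclideanCLM (𝕜 := ℝ) M g

/-- Ordered product `∏_{k=a}^{a+n-1} (I - α H k)`, factors ordered by increasing `k`. -/
def mulList (H : ℕ → Matrix (Fin d) (Fin d) ℝ) (α : ℝ) (a n : ℕ) :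
    Matrix (Fin d) (Fin d) ℝ :=
  ((List.range' a n).map (fun k => (1 : Matrix (Fin d) (Fin d) ℝ) - α • H k)).prod

/-- Truncated binomial expansion
`I + Σ_{l=1}^{L} Σ_{0 ≤ k₁ < … < k_l < K} ∏_{i=1}^{l} (-α H_{k_i})`,
with each inner product ordered by increasing index. -/
def binomSum (H : ℕ → Matrix (Fin d) (Fin d) ℝ) (α : ℝ) (K L : ℕ) :
    Matrix (Fin d) (Fin d) ℝ :=
  1 + ∑ l ∈ Finset.Icc 1 L, ∑ s ∈ (Finset.range K).powersetCard l,
      ((s.sort (· ≤ ·)).map (fun k => -(α • H k))).prod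

namespace BinomAux

variable {R : Type*} [Ring R]

theorem sort_insert_max (m : ℕ) (s : Finset ℕ) (h : ∀ b ∈ s, b < m) :
    (insert m s).sort (· ≤ ·) = s.sort (· ≤ ·) ++ [m] := by
  have hm : m ∉ s := fun hms => lt_irrefl m (h m hms)
  refine (fun hp hs => List.Perm.eq_of_pairwise' (Finset.pairwise_sort _ _) hs hp) ?_ ?_
  · exact ((Finset.sort_perm_toList _ _).trans
      ((Finset.toList_insert hm).trans
        (((Finset.sort_perm_toList s (· ≤ ·)).symm.cons m)))).trans
      (List.perm_append_singleton m _).symm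
  · rw [List.pairwise_append]
    refine ⟨Finset.pairwise_sort _ _, List.pairwise_singleton _ m, ?_⟩
    intro a ha b hb
    rw [List.mem_singleton] at hb
    subst hb
    exact le_of_lt (h a ((Finset.mem_sort _).mp ha))

/-- ordered product of `A` over a finset -/
def prodA (A : ℕ → R) (s : Finset ℕ) : R := ((s.sort (· ≤ ·)).map A).prod

theorem prodA_insert_max (A : ℕ → R) (m : ℕ) (s : Finset ℕ) (h : ∀ b ∈ s, b < m) :
    prodA A (insert m s) = prodA A s * A m := by
  rw [prodA, prodA, sort_insert_max m s h, List.map_append, List.prod_append]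
  simp

/-- sum over subsets of `range m` of cardinality `l` -/
def SL (A : ℕ → R) (l m : ℕ) : R := ∑ s ∈ (Finset.range m).powersetCard l, prodA A s

@[simp] theorem SL_zero (A : ℕ → R) (m : ℕ) : SL A 0 m = 1 := by
  simp [SL, prodA]

theorem SL_zero_of_lt (A : ℕ → R) {l m : ℕ} (h : m < l) : SL A l m = 0 := by
  rw [SL, Finset.powersetCard_eq_empty.mpr (by simpa using h), Finset.sum_empty]

theorem SL_succ (A : ℕ → R) (j m : ℕ) :
    SL A (j + 1) (m + 1) = SL A (j + 1) m + SL A j m * A m := by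
  have hm : m ∉ Finset.range m := by simp
  have hdisj : Disjoint ((Finset.range m).powersetCard (j + 1))
      (((Finset.range m).powersetCard j).image (insert m)) := by
    rw [Finset.disjoint_left]
    intro t ht ht'
    rw [Finset.mem_powersetCard] at ht
    rw [Finset.mem_image] at ht'
    obtain ⟨u, _, rfl⟩ := ht'
    exact hm (ht.1 (Finset.mem_insert_self m u))
  rw [SL, Finset.range_add_one, Finset.powersetCard_succ_insert hm, Finset.sum_union hdisj]
  congr 1
  rw [Finset.sum_image]
  · rw [SL, Finset.sum_mul]
    refine Finset.sum_congr rfl fun s hs => ?_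
    rw [Finset.mem_powersetCard] at hs
    exact prodA_insert_max A m s fun b hb => Finset.mem_range.mp (hs.1 hb)
  · intro s hs t ht hst
    rw [Finset.mem_coe, Finset.mem_powersetCard] at hs ht
    have hms : m ∉ s := fun h => hm (hs.1 h)
    have hmt : m ∉ t := fun h => hm (ht.1 h)
    rw [← Finset.erase_insert hms, ← Finset.erase_insert hmt, hst]

/-- truncated binomial expansion -/
def Bf (A : ℕ → R) (L m : ℕ) : R := 1 + ∑ j ∈ Finset.range L, SL A (j + 1) m

theorem Bf_zero (A : ℕ → R) (L : ℕ) : Bf A L 0 = 1 := by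
  rw [Bf]
  rw [Finset.sum_eq_zero fun j _ => SL_zero_of_lt A (Nat.succ_pos j), add_zero]

theorem Bf_step (A : ℕ → R) (L m : ℕ) :
    Bf A L m * (1 + A m) = Bf A L (m + 1) + SL A L m * A m := by
  have h1 : Bf A L (m + 1) = Bf A L m + ∑ j ∈ Finset.range L, SL A j m * A m := by
    rw [Bf, Bf]
    rw [Finset.sum_congr rfl fun j _ => SL_succ A j m, Finset.sum_add_distrib]
    exact (add_assoc _ _ _).symm
  have h2 : Bf A L m * A m = A m + ∑ j ∈ Finset.range L, SL A (j + 1) m * A m := by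
    rw [Bf, add_mul, one_mul, Finset.sum_mul]
  have h3 : A m + ∑ j ∈ Finset.range L, SL A (j + 1) m * A m
      = ∑ j ∈ Finset.range (L + 1), SL A j m * A m := by
    rw [Finset.sum_range_succ', SL_zero, one_mul, add_comm]
  have h4 : ∑ j ∈ Finset.range (L + 1), SL A j m * A m
      = ∑ j ∈ Finset.range L, SL A j m * A m + SL A L m * A m := Finset.sum_range_succ _ L
  rw [mul_add, mul_one, h2, h3, h4, h1]
  exact (add_assoc _ _ _).symm

/-- ordered product `∏_{k=a}^{a+n-1} (1 + A k)` -/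
def Pf (A : ℕ → R) (a n : ℕ) : R := ((List.range' a n).map (fun k => 1 + A k)).prod

theorem Pf_zero (A : ℕ → R) (a : ℕ) : Pf A a 0 = 1 := rfl

theorem Pf_succ (A : ℕ → R) (a n : ℕ) : Pf A a (n + 1) = (1 + A a) * Pf A (a + 1) n := by
  rw [Pf, List.range'_succ, List.map_cons, List.prod_cons, Pf]

/-- Main telescoping identity. -/
theorem key (A : ℕ → R) (L K : ℕ) (hL1 : 1 ≤ L) (hLK : L < K) :
    Pf A 0 K - Bf A L K
      = ∑ l ∈ Finset.Icc 1 (K - L), SL A L (K - l) * A (K - l) * Pf A (K - l + 1) (l - 1) := by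
  set T : ℕ → R := fun m => Bf A L m * Pf A m (K - m) with hT
  have h0 : T 0 = Pf A 0 K := by simp [hT, Bf_zero]
  have hK : T K = Bf A L K := by simp [hT, Pf_zero]
  have hstep : ∀ m ∈ Finset.range K,
      T m - T (m + 1) = SL A L m * A m * Pf A (m + 1) (K - (m + 1)) := by
    intro m hm
    rw [Finset.mem_range] at hm
    have hKm : K - m = (K - (m + 1)) + 1 := by omega
    simp only [hT]
    rw [hKm, Pf_succ, ← mul_assoc, Bf_step, add_mul, mul_assoc]
    abel
  have tel : T 0 - T K = ∑ m ∈ Finset.range K, (T m - T (m + 1)) :=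
    (Finset.sum_range_sub' T K).symm
  rw [← h0, ← hK, tel, Finset.sum_congr rfl hstep]
  have hsplit : Finset.range K = Finset.Ico 0 K := by rw [Finset.range_eq_Ico]
  rw [hsplit, ← Finset.sum_Ico_consecutive _ (Nat.zero_le L) (le_of_lt hLK)]
  have hzero : ∑ m ∈ Finset.Ico 0 L, SL A L m * A m * Pf A (m + 1) (K - (m + 1)) = 0 := by
    refine Finset.sum_eq_zero fun m hm => ?_
    rw [Finset.mem_Ico] at hm
    rw [SL_zero_of_lt A hm.2, zero_mul, zero_mul]
  rw [hzero, zero_add]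
  refine Finset.sum_nbij' (fun m => K - m) (fun l => K - l) ?_ ?_ ?_ ?_ ?_
  · intro m hm; rw [Finset.mem_Ico] at hm; rw [Finset.mem_Icc]; omega
  · intro l hl; rw [Finset.mem_Icc] at hl; rw [Finset.mem_Ico]; omega
  · intro m hm; rw [Finset.mem_Ico] at hm; omega
  · intro l hl; rw [Finset.mem_Icc] at hl; omega
  · intro m hm
    rw [Finset.mem_Ico] at hm
    have h1 : K - (K - m) = m := by omega
    have h2 : K - m - 1 = K - (m + 1) := by omega
    rw [h1, h2]

end BinomAux

theorem applyM_sub (M N : Matrix (Fin d) (Fin d) ℝ) (g : EuclideanSpace ℝ (Fin d)) :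
    applyM (M - N) g = applyM M g - applyM N g := by
  simp [applyM, map_sub]

theorem applyM_sum {ι : Type*} (s : Finset ι) (f : ι → Matrix (Fin d) (Fin d) ℝ)
    (g : EuclideanSpace ℝ (Fin d)) :
    applyM (∑ i ∈ s, f i) g = ∑ i ∈ s, applyM (f i) g := by
  simp [applyM, map_sum, ContinuousLinearMap.sum_apply]

/-- Exact residual decomposition of the BinomMAML meta-gradient difference:
`∏_{k=0}^{K-1}(I - α H_k) g − Ĝ
  = Σ_{l=1}^{K-L} [Σ_{0≤k₁<…<k_L≤K-1-l} ∏_{i=1}^{L}(-α H_{k_i})] (-α H_{K-l}) P_{l-1} g`. -/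
theorem binommaml_residual_decomposition (K L : ℕ) (Hm : ℕ → Matrix (Fin d) (Fin d) ℝ)
    (α : ℝ) (hL1 : 1 ≤ L) (hLK : L < K) (g : EuclideanSpace ℝ (Fin d)) :
    applyM (mulList Hm α 0 K) g - applyM (binomSum Hm α K L) g
      = ∑ l ∈ Finset.Icc 1 (K - L),
          applyM
            ((∑ s ∈ (Finset.range (K - l)).powersetCard L,
                ((s.sort (· ≤ ·)).map (fun k => -(α • Hm k))).prod)
              * (-(α • Hm (K - l))) * mulList Hm α (K - l + 1) (l - 1)) g := by
  set A : ℕ → Matrix (Fin d) (Fin d) ℝ := fun k => -(α • Hm k) with hA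
  have hmul : ∀ a n, mulList Hm α a n = BinomAux.Pf A a n := by
    intro a n
    simp only [mulList, BinomAux.Pf, hA, sub_eq_add_neg]
  have hbin : binomSum Hm α K L = BinomAux.Bf A L K := by
    rw [binomSum, BinomAux.Bf]
    congr 1
    refine Finset.sum_nbij' (fun l => l - 1) (fun j => j + 1) ?_ ?_ ?_ ?_ ?_
    · intro l hl; rw [Finset.mem_Icc] at hl; rw [Finset.mem_range]; omega
    · intro j hj; rw [Finset.mem_range] at hj; rw [Finset.mem_Icc]; omega
    · intro l hl; rw [Finset.mem_Icc] at hl; omega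
    · intro j _; omega
    · intro l hl
      rw [Finset.mem_Icc] at hl
      have : l - 1 + 1 = l := by omega
      rw [BinomAux.SL, this]
      rfl
  rw [hmul, hbin, ← applyM_sub, BinomAux.key A L K hL1 hLK, applyM_sum]
  refine Finset.sum_congr rfl fun l _ => ?_
  rw [hmul]
  rfl
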